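/- Let μ ≥ 1 be a real number and let a, b be complex numbers with |a| ≤ 1 and |b| ≤ 1. Then (1/4)·((|a|² − 1)² − (|b|² − 1)²) + (μ − 1)·|a − b|² ≤ Re( (μ·a − f_μ(b))·conj(a − b) ). -/

import Mathlib

/-- The stabilized Ginzburg–Landau nonlinearity `f_μ(x) = (1 − |x|²)·x + μ·x`. -/
noncomputable def fGL (μ : ℝ) (x : ℂ) : ℂ :=
  (1 - ((‖x‖ : ℝ) : ℂ) ^ 2) * x + (μ : ℂ) * x

theorem stabilized_nonlinear_estimate (μ : ℝ) (hμ : 1 ≤ μ) (a b : ℂ)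
    (ha : ‖a‖ ≤ 1) (hb : ‖b‖ ≤ 1) :
    (1 / 4 : ℝ) * ((‖a‖ ^ 2 - 1) ^ 2 - (‖b‖ ^ 2 - 1) ^ 2)
        + (μ - 1) * ‖a - b‖ ^ 2 ≤
      (((μ : ℂ) * a - fGL μ b) * (starRingEnd ℂ) (a - b)).re := by
  have ha' : a.re ^ 2 + a.im ^ 2 ≤ 1 := by
    have h := Complex.sq_norm a
    rw [Complex.normSq_apply] at h
    nlinarith [norm_nonneg a]
  have hb' : b.re ^ 2 + b.im ^ 2 ≤ 1 := by
    have h := Complex.sq_norm b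
    rw [Complex.normSq_apply] at h
    nlinarith [norm_nonneg b]
  simp only [fGL, ← Complex.ofReal_pow, Complex.sq_norm, Complex.normSq_apply, Complex.sub_re,
    Complex.sub_im, Complex.mul_re, Complex.mul_im, Complex.add_re, Complex.add_im,
    Complex.ofReal_re, Complex.ofReal_im, Complex.one_re, Complex.one_im, map_sub,
    Complex.conj_re, Complex.conj_im]
  ring_nf
  nlinarith [sq_nonneg ((a.re - b.re) * (a.im + b.im) - (a.im - b.im) * (a.re + b.re)),
    sq_nonneg (a.re - b.re), sq_nonneg (a.im - b.im),
    mul_nonneg (mul_nonneg (sub_nonneg.2 hμ) (sq_nonneg (a.re - b.re))) (sub_nonneg.2 hb'),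
    mul_nonneg (add_nonneg (sq_nonneg (a.re - b.re)) (sq_nonneg (a.im - b.im)))
      (sub_nonneg.2 hb'),
    sq_nonneg (a.re^2 + a.im^2 - b.re^2 - b.im^2),
    mul_nonneg (sub_nonneg.2 hμ) (add_nonneg (sq_nonneg (a.re - b.re)) (sq_nonneg (a.im - b.im)))]
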